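/- Let V be a finite set, G a simple graph on V with closed neighborhoods N_v, and fix two distinct vertices v, v' ∈ V such that the sets C = {u : 2·|N_u ∩ N_v| > |N_v|} and C' = {u : 2·|N_u ∩ N_{v'}| > |N_{v'}|} satisfy C ≠ C' and C ∩ C' ≠ ∅. Then every partition Π of V satisfies 4·φ(Π) ≥ min(|N_v|, |N_{v'}|). -/
import Mathlib


open scoped symmDiff

open Finset

variable {V : Type*} [Fintype V] [DecidableEq V]

/-- Closed neighborhood of `v`: `v` together with its adjacent vertices. -/
def nbhd (G : SimpleGraph V) [DecidableRel G.Adj] (v : V) : Finset V :=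
  insert v (G.neighborFinset v)

/-- `P` encodes a partition of `V`, where `P v` is the block containing `v`. -/
def IsPartitionFun (P : V → Finset V) : Prop :=
  (∀ v, v ∈ P v) ∧ ∀ u v : V, u ∈ P v → P u = P v

/-- Maximum disagreement of the partition `P`. -/
def phi (G : SimpleGraph V) [DecidableRel G.Adj] (P : V → Finset V) : ℕ :=
  Finset.univ.sup fun v => ((P v) ∆ (nbhd G v)).card

lemma block_eq_cluster (G : SimpleGraph V) [DecidableRel G.Adj] (P : V → Finset V)
    (hP : IsPartitionFun P) (v : V) (h4 : 4 * phi G P < (nbhd G v).card) :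
    P v = Finset.univ.filter fun u => (nbhd G v).card < 2 * (nbhd G u ∩ nbhd G v).card := by
  obtain ⟨hmem, heq⟩ := hP
  have hφ : ∀ u, ((P u) ∆ (nbhd G u)).card ≤ phi G P := fun u => Finset.le_sup (f := fun w => ((P w) ∆ (nbhd G w)).card) (mem_univ u)
  have hsd : ∀ (s t : Finset V), (s \ t).card ≤ (s ∆ t).card := fun s t =>
    card_le_card ((fun x hx => Finset.mem_symmDiff.mpr (Or.inl (Finset.mem_sdiff.mp hx))))
  have hsd' : ∀ (s t : Finset V), (t \ s).card ≤ (s ∆ t).card := fun s t =>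
    card_le_card (by rw [symmDiff_comm]; exact (fun x hx => Finset.mem_symmDiff.mpr (Or.inl (Finset.mem_sdiff.mp hx))))
  ext u
  simp only [mem_filter, mem_univ, true_and]
  constructor
  · intro hu
    have hpu : P u = P v := heq u v hu
    have key : (nbhd G v \ nbhd G u) ⊆ (nbhd G v \ P v) ∪ (P u \ nbhd G u) := by
      intro x hx
      simp only [mem_sdiff, mem_union] at hx ⊢
      by_cases hxp : x ∈ P v
      · exact Or.inr ⟨by rw [hpu]; exact hxp, hx.2⟩
      · exact Or.inl ⟨hx.1, hxp⟩
    have h1 : (nbhd G v \ nbhd G u).card ≤ 2 * phi G P := by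
      calc (nbhd G v \ nbhd G u).card ≤ ((nbhd G v \ P v) ∪ (P u \ nbhd G u)).card :=
            card_le_card key
        _ ≤ (nbhd G v \ P v).card + (P u \ nbhd G u).card := card_union_le _ _
        _ ≤ phi G P + phi G P := add_le_add (le_trans (hsd' _ _) (hφ v)) (le_trans (hsd _ _) (hφ u))
        _ = 2 * phi G P := by ring
    have h2 : (nbhd G v ∩ nbhd G u).card + (nbhd G v \ nbhd G u).card = (nbhd G v).card :=
      card_inter_add_card_sdiff _ _
    have h3 : (nbhd G u ∩ nbhd G v).card = (nbhd G v ∩ nbhd G u).card := by rw [inter_comm]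
    omega
  · intro hu
    by_contra hnu
    have hdisj : ∀ x, x ∈ P u → x ∉ P v := by
      intro x hx hx'
      have : P u = P v := (heq x u hx).symm.trans (heq x v hx')
      exact hnu (this ▸ hmem u)
    have key : (nbhd G u ∩ nbhd G v) ⊆ (nbhd G u \ P u) ∪ (nbhd G v \ P v) := by
      intro x hx
      simp only [mem_inter, mem_sdiff, mem_union] at hx ⊢
      by_cases hxp : x ∈ P u
      · exact Or.inr ⟨hx.2, hdisj x hxp⟩
      · exact Or.inl ⟨hx.1, hxp⟩
    have h1 : (nbhd G u ∩ nbhd G v).card ≤ 2 * phi G P := by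
      calc (nbhd G u ∩ nbhd G v).card ≤ ((nbhd G u \ P u) ∪ (nbhd G v \ P v)).card :=
            card_le_card key
        _ ≤ (nbhd G u \ P u).card + (nbhd G v \ P v).card := card_union_le _ _
        _ ≤ phi G P + phi G P := add_le_add (le_trans (hsd' _ _) (hφ u)) (le_trans (hsd' _ _) (hφ v))
        _ = 2 * phi G P := by ring
    omega

theorem statement14 (G : SimpleGraph V) [DecidableRel G.Adj] (v v' : V) (hvv' : v ≠ v')
    (C C' : Finset V)
    (hC : C = Finset.univ.filter fun u => (nbhd G v).card < 2 * (nbhd G u ∩ nbhd G v).card)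
    (hC' : C' = Finset.univ.filter fun u => (nbhd G v').card < 2 * (nbhd G u ∩ nbhd G v').card)
    (hne : C ≠ C') (hinter : (C ∩ C').Nonempty)
    (P : V → Finset V) (hP : IsPartitionFun P) :
    min (nbhd G v).card (nbhd G v').card ≤ 4 * phi G P := by
  by_contra h
  push_neg at h
  rw [lt_min_iff] at h
  have hv : P v = C := hC ▸ block_eq_cluster G P hP v h.1
  have hv' : P v' = C' := hC' ▸ block_eq_cluster G P hP v' h.2
  obtain ⟨w, hw⟩ := hinter
  rw [mem_inter] at hw
  have h1 : P w = P v := hP.2 w v (hv ▸ hw.1)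
  have h2 : P w = P v' := hP.2 w v' (hv' ▸ hw.2)
  exact hne (hv ▸ hv' ▸ h1.symm.trans h2 ▸ rfl)
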